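/- For every real p with 0 < p < π/2 satisfying 2p·tan(p) ≥ 1, and every real u, tan(p·√(1+u²)) ≥ tan(p) + (p/(2·cos²(p)))·u², provided p·√(1+u²) < π/2. -/

import Mathlib

open Real

theorem tan_sqrt_one_add_sq_bound (p u : ℝ)
    (hp0 : 0 < p) (hp : p < π / 2)
    (hptan : 2 * p * tan p ≥ 1)
    (hrange : p * Real.sqrt (1 + u ^ 2) < π / 2) :
    tan (p * Real.sqrt (1 + u ^ 2)) ≥ tan p + (p / (2 * cos p ^ 2)) * u ^ 2 := by
  have hu2 : (0:ℝ) ≤ u ^ 2 := sq_nonneg u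
  set s := Real.sqrt (1 + u ^ 2) with hs
  have hssq : s ^ 2 = 1 + u ^ 2 := Real.sq_sqrt (by linarith)
  have hsnn : 0 ≤ s := Real.sqrt_nonneg _
  have hs1 : 1 ≤ s := by nlinarith
  set t := p * s with ht
  have hpt : p ≤ t := le_mul_of_one_le_right hp0.le hs1
  have ht2 : t < π / 2 := hrange
  have hcos : ∀ x ∈ Set.Icc p t, 0 < cos x := fun x hx =>
    Real.cos_pos_of_mem_Ioo ⟨by linarith [hx.1, Real.pi_pos], by linarith [hx.2]⟩
  have hcosp : 0 < cos p := hcos p ⟨le_refl _, hpt⟩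
  have hsinp : 0 < sin p := Real.sin_pos_of_pos_of_lt_pi hp0 (by linarith [Real.pi_pos])
  have hpsin : cos p ≤ 2 * p * sin p := by
    have h1 := hptan
    rw [Real.tan_eq_sin_div_cos] at h1
    have h2 := mul_le_mul_of_nonneg_right h1 hcosp.le
    have h3 : sin p / cos p * cos p = sin p := div_mul_cancel₀ _ hcosp.ne'
    nlinarith [h2, h3]
  -- first stage: q x = 1/cos x^2 - x/(p*cos p^2) is monotone on [p,t]
  set q : ℝ → ℝ := fun x => 1 / cos x ^ 2 - x / (p * cos p ^ 2) with hq
  have hqderiv : ∀ x ∈ Set.Icc p t, HasDerivAt q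
      (2 * sin x / cos x ^ 3 - 1 / (p * cos p ^ 2)) x := by
    intro x hx
    have hcx : cos x ≠ 0 := (hcos x hx).ne'
    have h1 : HasDerivAt (fun y => cos y ^ 2) (2 * cos x ^ 1 * (-sin x)) x := by
      simpa using (Real.hasDerivAt_cos x).fun_pow 2
    have h2 : HasDerivAt (fun y => 1 / cos y ^ 2)
        (-(2 * cos x ^ 1 * (-sin x)) / (cos x ^ 2) ^ 2) x := by
      simpa [one_div] using h1.fun_inv (pow_ne_zero 2 hcx)
    have h3 : HasDerivAt (fun y => y / (p * cos p ^ 2)) (1 / (p * cos p ^ 2)) x :=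
      (hasDerivAt_id x).div_const _
    have := h2.fun_sub h3
    refine this.congr_deriv ?_
    field_simp
  have hqmono : MonotoneOn q (Set.Icc p t) := by
    apply monotoneOn_of_deriv_nonneg (convex_Icc p t)
    · exact fun x hx => ((hqderiv x hx).differentiableAt.continuousAt).continuousWithinAt
    · intro x hx
      rw [interior_Icc] at hx
      exact ((hqderiv x ⟨hx.1.le, hx.2.le⟩).differentiableAt).differentiableWithinAt
    · intro x hx
      rw [interior_Icc] at hx
      obtain ⟨hx1, hx2⟩ := hx
      have hx' : x ∈ Set.Icc p t := ⟨hx1.le, hx2.le⟩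
      rw [(hqderiv x hx').deriv]
      have hcx : 0 < cos x := hcos x hx'
      have hcle : cos x ≤ cos p :=
        Real.cos_le_cos_of_nonneg_of_le_pi hp0.le (by linarith [Real.pi_pos]) hx1.le
      have hsle : sin p ≤ sin x :=
        Real.strictMonoOn_sin.monotoneOn ⟨by linarith [Real.pi_pos], hp.le⟩
          ⟨by linarith [Real.pi_pos], by linarith⟩ hx1.le
      rw [sub_nonneg, div_le_div_iff₀ (by positivity) (by positivity)]
      have hA : cos p * cos p ^ 2 ≤ 2 * p * sin p * cos p ^ 2 :=
        mul_le_mul_of_nonneg_right hpsin (sq_nonneg _)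
      have hB : sin p * (2 * p * cos p ^ 2) ≤ sin x * (2 * p * cos p ^ 2) :=
        mul_le_mul_of_nonneg_right hsle (by positivity)
      have hC : cos x ^ 3 ≤ cos p ^ 3 := pow_le_pow_left₀ hcx.le hcle 3
      nlinarith [hA, hB, hC]
  -- second stage: h₀ x = tan x - x/cos p^2 - (x-p)^2/(2*p*cos p^2)
  set h₀ : ℝ → ℝ := fun x => tan x - x / cos p ^ 2 - (x - p) ^ 2 / (2 * p * cos p ^ 2) with hh
  have hhderiv : ∀ x ∈ Set.Icc p t, HasDerivAt h₀
      (1 / cos x ^ 2 - 1 / cos p ^ 2 - (x - p) / (p * cos p ^ 2)) x := by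
    intro x hx
    have hcx : cos x ≠ 0 := (hcos x hx).ne'
    have h1 : HasDerivAt tan (1 / cos x ^ 2) x := Real.hasDerivAt_tan hcx
    have h2 : HasDerivAt (fun y => y / cos p ^ 2) (1 / cos p ^ 2) x :=
      (hasDerivAt_id x).div_const _
    have h3 : HasDerivAt (fun y => (y - p) ^ 2 / (2 * p * cos p ^ 2))
        ((2 * (x - p) ^ 1 * 1) / (2 * p * cos p ^ 2)) x :=
      (((hasDerivAt_id x).sub_const p).pow 2).div_const _
    have := (h1.fun_sub h2).fun_sub h3
    refine this.congr_deriv ?_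
    field_simp
  have hhmono : MonotoneOn h₀ (Set.Icc p t) := by
    apply monotoneOn_of_deriv_nonneg (convex_Icc p t)
    · exact fun x hx => ((hhderiv x hx).differentiableAt.continuousAt).continuousWithinAt
    · intro x hx
      rw [interior_Icc] at hx
      exact ((hhderiv x ⟨hx.1.le, hx.2.le⟩).differentiableAt).differentiableWithinAt
    · intro x hx
      rw [interior_Icc] at hx
      obtain ⟨hx1, hx2⟩ := hx
      have hx' : x ∈ Set.Icc p t := ⟨hx1.le, hx2.le⟩
      rw [(hhderiv x hx').deriv]
      have hmq := hqmono ⟨le_refl p, hpt⟩ hx' hx1.le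
      simp only [hq] at hmq
      have heq : (x - p) / (p * cos p ^ 2) = x / (p * cos p ^ 2) - p / (p * cos p ^ 2) := by
        ring
      have heq2 : p / (p * cos p ^ 2) = 1 / cos p ^ 2 := by
        field_simp
      linarith
  have hfin := hhmono ⟨le_refl p, hpt⟩ ⟨hpt, le_refl t⟩ hpt
  simp only [hh] at hfin
  have hts : t ^ 2 = p ^ 2 + p ^ 2 * u ^ 2 := by
    rw [ht, mul_pow, hssq]; ring
  have hkey : (t - p) / cos p ^ 2 + (t - p) ^ 2 / (2 * p * cos p ^ 2)
      = p / (2 * cos p ^ 2) * u ^ 2 := by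
    field_simp
    linear_combination (2 * cos p ^ 2) * hts + (p ^ 2 - 2 * p ^ 2 * cos p ^ 2) * hssq
  have hfin2 : tan t - tan p ≥ (t - p) / cos p ^ 2 + (t - p) ^ 2 / (2 * p * cos p ^ 2) := by
    have he : t / cos p ^ 2 - p / cos p ^ 2 = (t - p) / cos p ^ 2 := by ring
    have he2 : ((p:ℝ) - p) ^ 2 / (2 * p * cos p ^ 2) = 0 := by simp
    linarith
  linarith [hkey ▸ hfin2]
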